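/- Let L : ℝ → ℝ be convex and lower-semicontinuous. Then for all x, θ ∈ ℝ^p and δ ≥ 0, max_{‖Δx‖ ≤ δ} L((x + Δx)ᵀθ) = max over s ∈ {-1, 1} of L(xᵀθ + δ s ‖θ‖_*), where ‖·‖_* denotes the dual norm of ‖·‖. -/

import Mathlib

open Matrix

/-- The dual norm `‖θ‖_* = sup_{‖x‖ ≤ 1} |θᵀx|` of a norm `N` on `ℝ^p`. -/
noncomputable def dualNorm {p : ℕ} (N : (Fin p → ℝ) → ℝ) (θ : Fin p → ℝ) : ℝ :=
  sSup {v | ∃ x : Fin p → ℝ, N x ≤ 1 ∧ v = |θ ⬝ᵥ x|}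

/-- Type synonym for `Fin p → ℝ`, to carry a custom norm. -/
def EE (p : ℕ) : Type := Fin p → ℝ

instance (p : ℕ) : AddCommGroup (EE p) := Pi.addCommGroup

noncomputable instance (p : ℕ) : Module ℝ (EE p) := Pi.module _ _ _

theorem auxIcc {E : Type*} [NormedAddCommGroup E] [NormedSpace ℝ E] [FiniteDimensional ℝ E]
    (f : E →ₗ[ℝ] ℝ) (δ : ℝ) (hδ : 0 ≤ δ) :
    {t : ℝ | ∃ v : E, ‖v‖ ≤ δ ∧ t = f v} =
      Set.Icc (-(δ * sSup {v : ℝ | ∃ x : E, ‖x‖ ≤ 1 ∧ v = |f x|}))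
        (δ * sSup {v : ℝ | ∃ x : E, ‖x‖ ≤ 1 ∧ v = |f x|}) := by
  have hfc : Continuous f := f.continuous_of_finiteDimensional
  set A := {v : ℝ | ∃ x : E, ‖x‖ ≤ 1 ∧ v = |f x|} with hA
  have hAeq : A = (fun x => |f x|) '' Metric.closedBall (0 : E) 1 := by
    ext v
    constructor
    · rintro ⟨x, hx, rfl⟩
      exact ⟨x, by simpa [Metric.mem_closedBall, dist_zero_right] using hx, rfl⟩
    · rintro ⟨x, hx, rfl⟩
      exact ⟨x, by simpa [Metric.mem_closedBall, dist_zero_right] using hx, rfl⟩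
  have hgreat : IsGreatest A (sSup A) := by
    rw [hAeq]
    exact ((isCompact_closedBall (0 : E) 1).image hfc.abs).isGreatest_sSup
      ⟨|f 0|, 0, Metric.mem_closedBall_self zero_le_one, rfl⟩
  set S := sSup A with hS
  obtain ⟨⟨x0, hx0n, hSx0⟩, hub⟩ := hgreat
  have hS0 : 0 ≤ S := hSx0 ▸ abs_nonneg _
  have hub' : ∀ x : E, ‖x‖ ≤ 1 → |f x| ≤ S := fun x hx => hub ⟨x, hx, rfl⟩
  -- choose y0 with f y0 = S
  obtain ⟨y0, hy0n, hy0⟩ : ∃ y0 : E, ‖y0‖ ≤ 1 ∧ f y0 = S := by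
    rcases (abs_eq hS0).1 hSx0.symm with h | h
    · exact ⟨x0, hx0n, h⟩
    · exact ⟨-x0, by simpa using hx0n, by simpa using congrArg Neg.neg h⟩
  ext t
  constructor
  · rintro ⟨v, hv, rfl⟩
    rw [Set.mem_Icc, ← abs_le]
    rcases eq_or_lt_of_le hδ with h0 | h0
    · have hv0 : v = 0 := norm_le_zero_iff.1 (hv.trans h0.symm.le)
      simp [hv0, ← h0]
    · have h1 : ‖δ⁻¹ • v‖ ≤ 1 := by
        rw [norm_smul, Real.norm_eq_abs, abs_of_pos (inv_pos.2 h0)]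
        rw [inv_mul_le_iff₀ h0, mul_one]
        exact hv
      have h2 := hub' _ h1
      rw [_root_.map_smul, smul_eq_mul, abs_mul, abs_of_pos (inv_pos.2 h0),
        inv_mul_le_iff₀ h0] at h2
      linarith [h2]
  · intro ht
    rw [Set.mem_Icc, ← abs_le] at ht
    rcases eq_or_lt_of_le hS0 with hSz | hSz
    · refine ⟨0, by simpa using hδ, ?_⟩
      have : |t| ≤ 0 := ht.trans (by rw [← hSz, mul_zero])
      simp [abs_nonpos_iff.1 this]
    · refine ⟨(t / S) • y0, ?_, ?_⟩
      · rw [norm_smul, Real.norm_eq_abs, abs_div, abs_of_pos hSz]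
        calc |t| / S * ‖y0‖ ≤ |t| / S * 1 := by
              apply mul_le_mul_of_nonneg_left hy0n (by positivity)
          _ = |t| / S := mul_one _
          _ ≤ δ := (div_le_iff₀ hSz).2 ht
      · rw [_root_.map_smul, smul_eq_mul, hy0, div_mul_cancel₀ _ (ne_of_gt hSz)]

theorem stmt2 {p : ℕ} (N : (Fin p → ℝ) → ℝ)
    (hN_eq : ∀ v, N v = 0 ↔ v = 0)
    (hN_smul : ∀ (a : ℝ) v, N (a • v) = |a| * N v)
    (hN_add : ∀ v w, N (v + w) ≤ N v + N w)
    (L : ℝ → ℝ) (hL_conv : ConvexOn ℝ Set.univ L) (hL_lsc : LowerSemicontinuous L)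
    (x θ : Fin p → ℝ) (δ : ℝ) (hδ : 0 ≤ δ) :
    IsGreatest {v | ∃ Δx : Fin p → ℝ, N Δx ≤ δ ∧ v = L ((x + Δx) ⬝ᵥ θ)}
      (max (L (x ⬝ᵥ θ + δ * dualNorm N θ)) (L (x ⬝ᵥ θ - δ * dualNorm N θ))) := by
  letI : NormedAddCommGroup (EE p) := AddGroupNorm.toNormedAddCommGroup
    { toFun := N
      map_zero' := (hN_eq 0).2 rfl
      add_le' := hN_add
      neg' := fun v => by
        have h := hN_smul (-1) (show Fin p → ℝ from v)
        rw [neg_one_smul, abs_neg, abs_one, one_mul] at h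
        exact h
      eq_zero_of_map_eq_zero' := fun v hv => (hN_eq v).1 hv }
  letI : NormedSpace ℝ (EE p) :=
    ⟨fun a v => by rw [Real.norm_eq_abs]; exact le_of_eq (hN_smul a v)⟩
  let e : (Fin p → ℝ) ≃ₗ[ℝ] EE p :=
    { toFun := fun v => v, invFun := fun v => v, map_add' := fun _ _ => rfl
      map_smul' := fun _ _ => rfl, left_inv := fun _ => rfl, right_inv := fun _ => rfl }
  haveI : FiniteDimensional ℝ (EE p) := Module.Finite.equiv e
  let f : EE p →ₗ[ℝ] ℝ :=
    { toFun := fun v => v ⬝ᵥ θ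
      map_add' := fun a b => add_dotProduct a b θ
      map_smul' := fun c v => smul_dotProduct c v θ }
  have hNnorm : ∀ v : EE p, ‖v‖ = N v := fun _ => rfl
  have hD : dualNorm N θ = sSup {v : ℝ | ∃ x : EE p, ‖x‖ ≤ 1 ∧ v = |f x|} := by
    unfold dualNorm
    congr 1
    ext v
    constructor
    · rintro ⟨y, hy, rfl⟩
      exact ⟨y, hy, by rw [dotProduct_comm]; rfl⟩
    · rintro ⟨y, hy, rfl⟩
      exact ⟨y, hy, congrArg abs (dotProduct_comm (show Fin p → ℝ from y) θ)⟩
  have key : {t : ℝ | ∃ v : EE p, ‖v‖ ≤ δ ∧ t = f v} =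
      Set.Icc (-(δ * dualNorm N θ)) (δ * dualNorm N θ) := by
    rw [hD]; exact auxIcc f δ hδ
  set D := dualNorm N θ with hDdef
  set M := δ * D with hMdef
  have h0mem : (0 : ℝ) ∈ Set.Icc (-M) M := by
    rw [← key]
    exact ⟨0, by rw [norm_zero]; exact hδ, (map_zero f).symm⟩
  have hM0 : 0 ≤ M := h0mem.2
  have hMM : -M ≤ M := le_trans h0mem.1 h0mem.2
  have hmemIcc : ∀ t ∈ Set.Icc (-M) M, ∃ Δx : Fin p → ℝ, N Δx ≤ δ ∧ Δx ⬝ᵥ θ = t := by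
    intro t ht
    rw [← key] at ht
    obtain ⟨v, hv, rfl⟩ := ht
    exact ⟨v, hv, rfl⟩
  constructor
  · rcases le_total (L (x ⬝ᵥ θ - M)) (L (x ⬝ᵥ θ + M)) with h | h
    · rw [max_eq_left h]
      obtain ⟨Δx, hΔ, hΔt⟩ := hmemIcc M ⟨hMM, le_refl _⟩
      exact ⟨Δx, hΔ, by rw [add_dotProduct, hΔt]⟩
    · rw [max_eq_right h]
      obtain ⟨Δx, hΔ, hΔt⟩ := hmemIcc (-M) ⟨le_refl _, hMM⟩
      exact ⟨Δx, hΔ, by rw [add_dotProduct, hΔt, ← sub_eq_add_neg]⟩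
  · rintro w ⟨Δx, hΔ, rfl⟩
    have htmem : Δx ⬝ᵥ θ ∈ Set.Icc (-M) M := by
      rw [← key]
      exact ⟨Δx, hΔ, rfl⟩
    have hseg : (x + Δx) ⬝ᵥ θ ∈ segment ℝ (x ⬝ᵥ θ - M) (x ⬝ᵥ θ + M) := by
      rw [segment_eq_Icc (by linarith [htmem.1, htmem.2] : x ⬝ᵥ θ - M ≤ x ⬝ᵥ θ + M),
        add_dotProduct]
      exact ⟨by linarith [htmem.1], by linarith [htmem.2]⟩
    have := hL_conv.le_on_segment (Set.mem_univ (x ⬝ᵥ θ - M)) (Set.mem_univ (x ⬝ᵥ θ + M)) hseg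
    rw [max_comm] at this
    exact this
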